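/- Pathwise Lagrange–d'Alembert–Pontryagin principle: let F : ℝⁿ × ℝⁿ → ℝⁿ be continuous (an external force field, F(q,v) regarded as a covector via the Euclidean pairing). A path (q,v,p) satisfies the Lagrange–d'Alembert–Pontryagin principle, i.e. d/dε|_{ε=0} 𝔊(q+εδq, v+εδv, p+εδp) + ∫_a^b ⟨F(q(t),v(t)), δq(t)⟩ dt = 0 for every admissible variation (δq,δv,δp), if and only if q' = v, p(t) = (∂L/∂v)(q(t),v(t)), and p is continuously differentiable with p'(t) = (∂L/∂q)(q(t),v(t)) + F(q(t),v(t)) + Σ_{i=1}^m (∂γ_i/∂q)(q(t)) w_i'(t) for all t ∈ [a,b]. -/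

import Mathlib

open scoped RealInnerProductSpace

/-- The pathwise Hamilton–Pontryagin action
`𝔊(q,v,p) = ∫_a^b [ L(q,v) + ∑_i γ_i(q) w_i' + ⟨p, q' − v⟩ ] dt`,
written as a functional of the path `q`, its derivative `q'`, the velocity `v`
and the momentum `p`. -/
noncomputable def HPaction (a b : ℝ) (n m : ℕ)
    (L : EuclideanSpace ℝ (Fin n) × EuclideanSpace ℝ (Fin n) → ℝ)
    (γ : ℕ → EuclideanSpace ℝ (Fin n) → ℝ) (w' : ℕ → ℝ → ℝ)
    (q q' v p : ℝ → EuclideanSpace ℝ (Fin n)) : ℝ :=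
  ∫ t in a..b,
    (L (q t, v t) + ∑ i ∈ Finset.range m, γ i (q t) * w' i t
      + ⟪p t, q' t - v t⟫)


open Set MeasureTheory intervalIntegral Filter Topology

variable {n : ℕ}
local notation "E" => EuclideanSpace ℝ (Fin n)

lemma inner_gradient_apply (f : E → ℝ) (x h : E) :
    ⟪gradient f x, h⟫ = fderiv ℝ f x h := by
  rw [gradient, InnerProductSpace.toDual_symm_apply]

lemma fderiv_partial_right (L : E × E → ℝ) (x y : E) (hL : DifferentiableAt ℝ L (x, y)) :
    fderiv ℝ (fun u => L (x, u)) y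
      = (fderiv ℝ L (x, y)).comp (ContinuousLinearMap.inr ℝ E E) := by
  have h1 : HasFDerivAt (fun u : E => (x, u)) (ContinuousLinearMap.inr ℝ E E) y :=
    (hasFDerivAt_const x y).prodMk (hasFDerivAt_id y)
  exact (hL.hasFDerivAt.comp y h1).fderiv

lemma fderiv_partial_left (L : E × E → ℝ) (x y : E) (hL : DifferentiableAt ℝ L (x, y)) :
    fderiv ℝ (fun u => L (u, y)) x
      = (fderiv ℝ L (x, y)).comp (ContinuousLinearMap.inl ℝ E E) := by
  have h1 : HasFDerivAt (fun u : E => (u, y)) (ContinuousLinearMap.inl ℝ E E) x :=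
    (hasFDerivAt_id x).prodMk (hasFDerivAt_const y x)
  exact (hL.hasFDerivAt.comp x h1).fderiv

section FTC
variable {X : Type*} [NormedAddCommGroup X] [NormedSpace ℝ X] [CompleteSpace X]
  {a b : ℝ}

omit [CompleteSpace X] in
lemma hasDerivWithinAt_singleton' (g : ℝ → X) (c : X) (x : ℝ) :
    HasDerivWithinAt g c {x} x := by
  simp only [HasDerivWithinAt, nhdsWithin_singleton, hasDerivAtFilter_iff_isLittleO,
    Asymptotics.isLittleO_pure, sub_self]
  simp

lemma ftc_within (hab : a < b) (f : ℝ → X) (hf : ContinuousOn f (Icc a b))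
    {t : ℝ} (ht : t ∈ Icc a b) :
    HasDerivWithinAt (fun u => ∫ s in a..u, f s) (f t) (Icc a b) t := by
  have hint : IntervalIntegrable f volume a b := by
    apply ContinuousOn.intervalIntegrable; rwa [uIcc_of_le hab.le]
  have htu : t ∈ uIcc a b := by rw [uIcc_of_le hab.le]; exact ht
  have hint' : IntervalIntegrable f volume a t :=
    hint.mono_set (uIcc_subset_uIcc left_mem_uIcc htu)
  have haesm : AEStronglyMeasurable f (volume.restrict (Icc a b)) :=
    hf.aestronglyMeasurable measurableSet_Icc
  have hL : HasDerivWithinAt (fun u => ∫ s in a..u, f s) (f t) (Icc a t) t := by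
    rcases eq_or_lt_of_le ht.1 with h | h
    · rw [← h, Icc_self]; exact hasDerivWithinAt_singleton' _ _ _
    · have hmem : Icc a b ∈ 𝓝[≤] t := Icc_mem_nhdsLE_of_mem ⟨h, ht.2⟩
      have := intervalIntegral.integral_hasDerivWithinAt_right (s := Iic t) hint'
        (⟨Icc a b, hmem, haesm⟩ : StronglyMeasurableAtFilter f (𝓝[≤] t) volume)
        ((hf t ht).mono_of_mem_nhdsWithin hmem)
      exact this.mono Icc_subset_Iic_self
  have hR : HasDerivWithinAt (fun u => ∫ s in a..u, f s) (f t) (Icc t b) t := by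
    rcases eq_or_lt_of_le ht.2 with h | h
    · rw [h, Icc_self]; exact hasDerivWithinAt_singleton' _ _ _
    · have hmem : Icc a b ∈ 𝓝[>] t := Filter.mem_of_superset (Ioo_mem_nhdsGT_of_mem ⟨ht.1, h⟩) Ioo_subset_Icc_self
      have := intervalIntegral.integral_hasDerivWithinAt_right (s := Ici t) hint'
        (⟨Icc a b, hmem, haesm⟩ : StronglyMeasurableAtFilter f (𝓝[>] t) volume)
        ((hf t ht).mono_of_mem_nhdsWithin hmem)
      exact this.mono Icc_subset_Ici_self
  exact (Icc_union_Icc_eq_Icc ht.1 ht.2) ▸ hL.union hR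

end FTC

section Fund
variable {a b : ℝ} {n : ℕ}

lemma zero_of_nonneg_integral_zero (hab : a < b) {g : ℝ → ℝ}
    (hg : ContinuousOn g (Icc a b)) (h0 : ∀ t ∈ Icc a b, 0 ≤ g t)
    (hI : (∫ t in a..b, g t) = 0) : ∀ t ∈ Icc a b, g t = 0 := by
  have hint : IntervalIntegrable g volume a b := by
    apply ContinuousOn.intervalIntegrable; rwa [uIcc_of_le hab.le]
  have hG : ∀ t ∈ Icc a b, (∫ s in a..t, g s) = 0 := by
    intro t ht
    have h1 : IntervalIntegrable g volume a t := by
      apply ContinuousOn.intervalIntegrable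
      rw [uIcc_of_le ht.1]; exact hg.mono (Icc_subset_Icc le_rfl ht.2)
    have h2 : IntervalIntegrable g volume t b := by
      apply ContinuousOn.intervalIntegrable
      rw [uIcc_of_le ht.2]; exact hg.mono (Icc_subset_Icc ht.1 le_rfl)
    have hsplit := intervalIntegral.integral_add_adjacent_intervals h1 h2
    have hge1 : 0 ≤ ∫ s in a..t, g s :=
      intervalIntegral.integral_nonneg ht.1
        (fun u hu => h0 u ⟨hu.1, hu.2.trans ht.2⟩)
    have hge2 : 0 ≤ ∫ s in t..b, g s :=
      intervalIntegral.integral_nonneg ht.2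
        (fun u hu => h0 u ⟨ht.1.trans hu.1, hu.2⟩)
    linarith [hsplit.symm ▸ hI]
  intro t ht
  have hd1 := ftc_within hab g hg ht
  have hd2 : HasDerivWithinAt (fun u => ∫ s in a..u, g s) 0 (Icc a b) t :=
    (hasDerivWithinAt_const t _ (0:ℝ)).congr (fun u hu => hG u hu) (hG t ht)
  have := hd1.derivWithin ((uniqueDiffOn_Icc hab) t ht)
  rw [hd2.derivWithin ((uniqueDiffOn_Icc hab) t ht)] at this
  exact this.symm

lemma eq_const_of_orthogonal (hab : a < b) {h : ℝ → EuclideanSpace ℝ (Fin n)}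
    (hh : ContinuousOn h (Icc a b))
    (hyp : ∀ φ : ℝ → EuclideanSpace ℝ (Fin n), ContinuousOn φ (Icc a b) →
      (∫ t in a..b, φ t) = 0 → (∫ t in a..b, ⟪h t, φ t⟫) = 0) :
    ∀ t ∈ Icc a b, h t = (b - a)⁻¹ • ∫ s in a..b, h s := by
  set c : EuclideanSpace ℝ (Fin n) := (b - a)⁻¹ • ∫ s in a..b, h s with hc
  have hba : b - a ≠ 0 := sub_ne_zero.2 hab.ne'
  have hint : IntervalIntegrable h volume a b := by
    apply ContinuousOn.intervalIntegrable; rwa [uIcc_of_le hab.le]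
  have hφc : ContinuousOn (fun t => h t - c) (Icc a b) := hh.sub continuousOn_const
  have hφint : IntervalIntegrable (fun t => h t - c) volume a b :=
    hint.sub (intervalIntegrable_const)
  have hφ0 : (∫ t in a..b, (h t - c)) = 0 := by
    rw [intervalIntegral.integral_sub hint intervalIntegrable_const,
      intervalIntegral.integral_const, hc, smul_smul, mul_inv_cancel₀ hba, one_smul, sub_self]
  have key : (∫ t in a..b, ⟪h t - c, h t - c⟫) = 0 := by
    have e1 := hyp (fun t => h t - c) hφc hφ0
    have e2 : (∫ t in a..b, ⟪c, h t - c⟫) = 0 := by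
      have := (innerSL ℝ c).intervalIntegral_comp_comm hφint
      simp only [innerSL_apply_apply] at this
      rw [this, hφ0, inner_zero_right]
    have e3 : (∫ t in a..b, (⟪h t, h t - c⟫ - ⟪c, h t - c⟫))
        = ∫ t in a..b, ⟪h t - c, h t - c⟫ := by
      congr 1; funext t; rw [← inner_sub_left]
    rw [← e3, intervalIntegral.integral_sub, e1, e2, sub_self]
    · apply ContinuousOn.intervalIntegrable
      rw [uIcc_of_le hab.le]; exact hh.inner hφc
    · apply ContinuousOn.intervalIntegrable
      rw [uIcc_of_le hab.le]; exact continuousOn_const.inner hφc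
  have hcont : ContinuousOn (fun t => ⟪h t - c, h t - c⟫) (Icc a b) := hφc.inner hφc
  have hz := zero_of_nonneg_integral_zero hab hcont
    (fun t _ => real_inner_self_nonneg) key
  intro t ht
  have h1 := hz t ht
  have h2 : h t - c = 0 := by rwa [inner_self_eq_zero] at h1
  exact sub_eq_zero.1 h2

end Fund

section Parts
variable {a b : ℝ} {n : ℕ}

lemma integral_inner_parts (hab : a < b) {u δ u' δ' : ℝ → E}
    (hu : ∀ t ∈ Icc a b, HasDerivWithinAt u (u' t) (Icc a b) t)
    (hu' : ContinuousOn u' (Icc a b))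
    (hδ : ∀ t ∈ Icc a b, HasDerivWithinAt δ (δ' t) (Icc a b) t)
    (hδ' : ContinuousOn δ' (Icc a b)) :
    (∫ t in a..b, (⟪u t, δ' t⟫ + ⟪u' t, δ t⟫)) = ⟪u b, δ b⟫ - ⟪u a, δ a⟫ := by
  have huc : ContinuousOn u (Icc a b) := fun t ht => (hu t ht).continuousWithinAt
  have hδc : ContinuousOn δ (Icc a b) := fun t ht => (hδ t ht).continuousWithinAt
  have hcont : ContinuousOn (fun t => ⟪u t, δ t⟫) (Icc a b) := huc.inner hδc
  have hderiv : ∀ x ∈ Ioo a b, HasDerivWithinAt (fun t => ⟪u t, δ t⟫)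
      (⟪u x, δ' x⟫ + ⟪u' x, δ x⟫) (Ioi x) x := by
    intro x hx
    have hmem : Icc a b ∈ 𝓝[>] x := Filter.mem_of_superset (Ioo_mem_nhdsGT_of_mem ⟨hx.1.le, hx.2⟩) Ioo_subset_Icc_self
    exact ((hu x (Ioo_subset_Icc_self hx)).inner ℝ
      (hδ x (Ioo_subset_Icc_self hx))).mono_of_mem_nhdsWithin hmem
  have hint : IntervalIntegrable (fun t => ⟪u t, δ' t⟫ + ⟪u' t, δ t⟫) volume a b := by
    apply ContinuousOn.intervalIntegrable
    rw [uIcc_of_le hab.le]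
    exact (huc.inner hδ').add (hu'.inner hδc)
  exact intervalIntegral.integral_eq_sub_of_hasDeriv_right_of_le hab.le hcont hderiv hint

end Parts

section Main
variable {a b : ℝ} {n m : ℕ}

set_option maxHeartbeats 1000000 in
lemma hasDerivAt_action (hab : a < b)
    (L : EuclideanSpace ℝ (Fin n) × EuclideanSpace ℝ (Fin n) → ℝ)
    (hL : ContDiff ℝ 2 L)
    (γ : ℕ → EuclideanSpace ℝ (Fin n) → ℝ)
    (hγ : ∀ i < m, ContDiff ℝ 2 (γ i))
    (w' : ℕ → ℝ → ℝ) (hw' : ∀ i < m, ContinuousOn (w' i) (Icc a b))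
    (q q' v p : ℝ → EuclideanSpace ℝ (Fin n))
    (hqc : ContinuousOn q (Icc a b))
    (hq' : ContinuousOn q' (Icc a b))
    (hv : ContinuousOn v (Icc a b))
    (hp : ContinuousOn p (Icc a b))
    (δq δq' δv δp : ℝ → EuclideanSpace ℝ (Fin n))
    (hδq : ContinuousOn δq (Icc a b))
    (hδq' : ContinuousOn δq' (Icc a b))
    (hδv : ContinuousOn δv (Icc a b))
    (hδp : ContinuousOn δp (Icc a b)) :
    HasDerivAt (fun ε : ℝ => HPaction a b n m L γ w'
        (fun t => q t + ε • δq t) (fun t => q' t + ε • δq' t)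
        (fun t => v t + ε • δv t) (fun t => p t + ε • δp t))
      (∫ t in a..b,
        (fderiv ℝ L (q t, v t) (δq t, δv t)
          + ∑ i ∈ Finset.range m, fderiv ℝ (γ i) (q t) (δq t) * w' i t
          + (⟪p t, δq' t - δv t⟫ + ⟪δp t, q' t - v t⟫))) 0 := by
  classical
  set G' : ℝ → ℝ → ℝ := fun x t =>
    fderiv ℝ L (q t + x • δq t, v t + x • δv t) (δq t, δv t)
      + ∑ i ∈ Finset.range m, fderiv ℝ (γ i) (q t + x • δq t) (δq t) * w' i t
      + (⟪p t + x • δp t, δq' t - δv t⟫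
          + ⟪δp t, (q' t + x • δq' t) - (v t + x • δv t)⟫) with hG'
  -- joint continuity helpers
  have hQ : ∀ (f g : ℝ → EuclideanSpace ℝ (Fin n)), ContinuousOn f (Icc a b) →
      ContinuousOn g (Icc a b) →
      ContinuousOn (fun z : ℝ × ℝ => f z.2 + z.1 • g z.2) (Set.Icc (-1:ℝ) 1 ×ˢ Icc a b) := by
    intro f g hf hg
    have h2 : Set.MapsTo (Prod.snd : ℝ × ℝ → ℝ) (Set.Icc (-1:ℝ) 1 ×ˢ Icc a b) (Icc a b) :=
      fun z hz => hz.2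
    exact (hf.comp continuousOn_snd h2).add
      (continuousOn_fst.smul (hg.comp continuousOn_snd h2))
  have h2 : Set.MapsTo (Prod.snd : ℝ × ℝ → ℝ) (Set.Icc (-1:ℝ) 1 ×ˢ Icc a b) (Icc a b) :=
    fun z hz => hz.2
  -- continuity of G' jointly
  have hG'cont : ContinuousOn (fun z : ℝ × ℝ => G' z.1 z.2) (Set.Icc (-1:ℝ) 1 ×ˢ Icc a b) := by
    rw [hG']
    apply ContinuousOn.add
    apply ContinuousOn.add
    · -- fderiv L term
      apply ContinuousOn.clm_apply
      · exact ((hL.continuous_fderiv two_ne_zero).comp_continuousOn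
          ((hQ q δq hqc hδq).prodMk (hQ v δv hv hδv)))
      · exact ((hδq.comp continuousOn_snd h2).prodMk (hδv.comp continuousOn_snd h2))
    · -- sum term
      apply continuousOn_finset_sum
      intro i hi
      have hi' := Finset.mem_range.1 hi
      apply ContinuousOn.mul
      · apply ContinuousOn.clm_apply
        · exact (((hγ i hi').continuous_fderiv two_ne_zero).comp_continuousOn (hQ q δq hqc hδq))
        · exact hδq.comp continuousOn_snd h2
      · exact (hw' i hi').comp continuousOn_snd h2
    · apply ContinuousOn.add
      · exact (hQ p δp hp hδp).inner
          ((hδq'.comp continuousOn_snd h2).sub (hδv.comp continuousOn_snd h2))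
      · exact (hδp.comp continuousOn_snd h2).inner
          ((hQ q' δq' hq' hδq').sub (hQ v δv hv hδv))
  -- bound
  obtain ⟨C, hC⟩ := (((isCompact_Icc (a := (-1:ℝ)) (b := 1)).prod isCompact_Icc)).exists_bound_of_continuousOn hG'cont
  -- differentiability in x
  have hdiff : ∀ (t : ℝ), t ∈ Icc a b → ∀ x : ℝ,
      HasDerivAt (fun y : ℝ =>
        L (q t + y • δq t, v t + y • δv t)
          + ∑ i ∈ Finset.range m, γ i (q t + y • δq t) * w' i t
          + ⟪p t + y • δp t, (q' t + y • δq' t) - (v t + y • δv t)⟫) (G' x t) x := by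
    intro t _ x
    have hq1 : HasDerivAt (fun y : ℝ => q t + y • δq t) (δq t) x := by
      simpa using ((hasDerivAt_id x).smul_const (δq t)).const_add (q t)
    have hv1 : HasDerivAt (fun y : ℝ => v t + y • δv t) (δv t) x := by
      simpa using ((hasDerivAt_id x).smul_const (δv t)).const_add (v t)
    have hp1 : HasDerivAt (fun y : ℝ => p t + y • δp t) (δp t) x := by
      simpa using ((hasDerivAt_id x).smul_const (δp t)).const_add (p t)
    have hq'1 : HasDerivAt (fun y : ℝ => q' t + y • δq' t) (δq' t) x := by
      simpa using ((hasDerivAt_id x).smul_const (δq' t)).const_add (q' t)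
    have hterm1 : HasDerivAt (fun y : ℝ => L (q t + y • δq t, v t + y • δv t))
        (fderiv ℝ L (q t + x • δq t, v t + x • δv t) (δq t, δv t)) x :=
      (hL.differentiable two_ne_zero _).hasFDerivAt.comp_hasDerivAt x (hq1.prodMk hv1)
    have hterm2 : HasDerivAt (fun y : ℝ =>
        ∑ i ∈ Finset.range m, γ i (q t + y • δq t) * w' i t)
        (∑ i ∈ Finset.range m, fderiv ℝ (γ i) (q t + x • δq t) (δq t) * w' i t) x := by
      apply HasDerivAt.fun_sum
      intro i hi
      exact (((hγ i (Finset.mem_range.1 hi)).differentiable two_ne_zero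
        _).hasFDerivAt.comp_hasDerivAt x hq1).mul_const (w' i t)
    have hterm3 : HasDerivAt (fun y : ℝ =>
        ⟪p t + y • δp t, (q' t + y • δq' t) - (v t + y • δv t)⟫)
        (⟪p t + x • δp t, δq' t - δv t⟫
          + ⟪δp t, (q' t + x • δq' t) - (v t + x • δv t)⟫) x :=
      HasDerivAt.inner ℝ hp1 (hq'1.sub hv1)
    exact (hterm1.add hterm2).add hterm3
  -- measurability of G x
  have hGmeas : ∀ x : ℝ, AEStronglyMeasurable (fun t =>
      L (q t + x • δq t, v t + x • δv t)
        + ∑ i ∈ Finset.range m, γ i (q t + x • δq t) * w' i t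
        + ⟪p t + x • δp t, (q' t + x • δq' t) - (v t + x • δv t)⟫)
      (volume.restrict (Set.uIoc a b)) := by
    intro x
    have hcont : ContinuousOn (fun t =>
        L (q t + x • δq t, v t + x • δv t)
          + ∑ i ∈ Finset.range m, γ i (q t + x • δq t) * w' i t
          + ⟪p t + x • δp t, (q' t + x • δq' t) - (v t + x • δv t)⟫) (Icc a b) := by
      have hq0 : ContinuousOn (fun t => q t + x • δq t) (Icc a b) :=
        hqc.add (hδq.const_smul x)
      have hv0 : ContinuousOn (fun t => v t + x • δv t) (Icc a b) :=
        hv.add (hδv.const_smul x)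
      have hp0 : ContinuousOn (fun t => p t + x • δp t) (Icc a b) :=
        hp.add (hδp.const_smul x)
      have hq'0 : ContinuousOn (fun t => q' t + x • δq' t) (Icc a b) :=
        hq'.add (hδq'.const_smul x)
      refine (ContinuousOn.add (ContinuousOn.add ?_ ?_) ?_)
      · exact hL.continuous.comp_continuousOn (hq0.prodMk hv0)
      · apply continuousOn_finset_sum
        intro i hi
        exact (((hγ i (Finset.mem_range.1 hi)).continuous.comp_continuousOn hq0)).mul
          (hw' i (Finset.mem_range.1 hi))
      · exact hp0.inner (hq'0.sub hv0)
    have : Set.uIoc a b ⊆ Icc a b := by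
      rw [Set.uIoc_of_le hab.le]; exact Ioc_subset_Icc_self
    exact (hcont.mono this).aestronglyMeasurable measurableSet_uIoc
  have hG'contIcc : ContinuousOn (fun t => G' 0 t) (Icc a b) := by
    intro t ht
    have := hG'cont.comp (f := fun t : ℝ => ((0:ℝ), t))
      (continuousOn_const.prodMk (continuousOn_id)) (fun s hs => ⟨⟨by norm_num, by norm_num⟩, hs⟩)
    exact this t ht
  have key := intervalIntegral.hasDerivAt_integral_of_dominated_loc_of_deriv_le
    (F := fun x t =>
      L (q t + x • δq t, v t + x • δv t)
        + ∑ i ∈ Finset.range m, γ i (q t + x • δq t) * w' i t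
        + ⟪p t + x • δp t, (q' t + x • δq' t) - (v t + x • δv t)⟫)
    (F' := G') (x₀ := (0:ℝ)) (bound := fun _ => C) (s := Metric.ball 0 1) (μ := volume)
    (Metric.ball_mem_nhds _ one_pos)
    (Filter.Eventually.of_forall hGmeas)
    (by
      apply ContinuousOn.intervalIntegrable
      rw [uIcc_of_le hab.le]
      have hq0 : ContinuousOn (fun t => q t + (0:ℝ) • δq t) (Icc a b) :=
        hqc.add (hδq.const_smul (0:ℝ))
      have hv0 : ContinuousOn (fun t => v t + (0:ℝ) • δv t) (Icc a b) :=
        hv.add (hδv.const_smul (0:ℝ))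
      have hp0 : ContinuousOn (fun t => p t + (0:ℝ) • δp t) (Icc a b) :=
        hp.add (hδp.const_smul (0:ℝ))
      have hq'0 : ContinuousOn (fun t => q' t + (0:ℝ) • δq' t) (Icc a b) :=
        hq'.add (hδq'.const_smul (0:ℝ))
      refine (ContinuousOn.add (ContinuousOn.add ?_ ?_) ?_)
      · exact hL.continuous.comp_continuousOn (hq0.prodMk hv0)
      · apply continuousOn_finset_sum
        intro i hi
        exact (((hγ i (Finset.mem_range.1 hi)).continuous.comp_continuousOn hq0)).mul
          (hw' i (Finset.mem_range.1 hi))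
      · exact hp0.inner (hq'0.sub hv0))
    (by
      have : Set.uIoc a b ⊆ Icc a b := by
        rw [Set.uIoc_of_le hab.le]; exact Ioc_subset_Icc_self
      exact ((hG'contIcc.mono this)).aestronglyMeasurable measurableSet_uIoc)
    (by
      apply Filter.Eventually.of_forall
      intro t ht x hx
      have ht' : t ∈ Icc a b := by
        rw [Set.uIoc_of_le hab.le] at ht; exact Ioc_subset_Icc_self ht
      have hx' : x ∈ Set.Icc (-1:ℝ) 1 := by
        rw [Metric.mem_ball, Real.dist_eq, sub_zero] at hx
        constructor <;> [linarith [neg_abs_le x]; linarith [le_abs_self x]]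
      exact hC (x, t) ⟨hx', ht'⟩)
    intervalIntegrable_const
    (by
      apply Filter.Eventually.of_forall
      intro t ht x _
      have ht' : t ∈ Icc a b := by
        rw [Set.uIoc_of_le hab.le] at ht; exact Ioc_subset_Icc_self ht
      exact hdiff t ht' x)
  have hval : (∫ t in a..b, G' 0 t) = ∫ t in a..b,
      (fderiv ℝ L (q t, v t) (δq t, δv t)
        + ∑ i ∈ Finset.range m, fderiv ℝ (γ i) (q t) (δq t) * w' i t
        + (⟪p t, δq' t - δv t⟫ + ⟪δp t, q' t - v t⟫)) := by
    congr 1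
    funext t
    simp [hG']
  rw [← hval]
  exact key.2

section Grad
variable {a b : ℝ} {n m : ℕ}

lemma inner_grad_right (L : EuclideanSpace ℝ (Fin n) × EuclideanSpace ℝ (Fin n) → ℝ)
    (hL : ContDiff ℝ 2 L) (x y h : EuclideanSpace ℝ (Fin n)) :
    ⟪gradient (fun u => L (x, u)) y, h⟫ = fderiv ℝ L (x, y) (0, h) := by
  rw [inner_gradient_apply, fderiv_partial_right L x y (hL.differentiable two_ne_zero _)]
  rfl

lemma inner_grad_left (L : EuclideanSpace ℝ (Fin n) × EuclideanSpace ℝ (Fin n) → ℝ)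
    (hL : ContDiff ℝ 2 L) (x y h : EuclideanSpace ℝ (Fin n)) :
    ⟪gradient (fun u => L (u, y)) x, h⟫ = fderiv ℝ L (x, y) (h, 0) := by
  rw [inner_gradient_apply, fderiv_partial_left L x y (hL.differentiable two_ne_zero _)]
  rfl

lemma inner_sum_smul_grad (γ : ℕ → EuclideanSpace ℝ (Fin n) → ℝ)
    (w' : ℕ → ℝ → ℝ) (t : ℝ) (x h : EuclideanSpace ℝ (Fin n)) :
    ⟪∑ i ∈ Finset.range m, w' i t • gradient (γ i) x, h⟫
      = ∑ i ∈ Finset.range m, fderiv ℝ (γ i) x h * w' i t := by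
  rw [sum_inner]
  refine Finset.sum_congr rfl fun i _ => ?_
  rw [real_inner_smul_left, inner_gradient_apply, mul_comm]

lemma contOn_grad_right (L : EuclideanSpace ℝ (Fin n) × EuclideanSpace ℝ (Fin n) → ℝ)
    (hL : ContDiff ℝ 2 L) {q v : ℝ → EuclideanSpace ℝ (Fin n)}
    (hqc : ContinuousOn q (Icc a b)) (hv : ContinuousOn v (Icc a b)) :
    ContinuousOn (fun t => gradient (fun u => L (q t, u)) (v t)) (Icc a b) := by
  have heq : ∀ t, gradient (fun u => L (q t, u)) (v t)
      = (InnerProductSpace.toDual ℝ (EuclideanSpace ℝ (Fin n))).symm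
        ((fderiv ℝ L (q t, v t)).comp
          (ContinuousLinearMap.inr ℝ (EuclideanSpace ℝ (Fin n)) (EuclideanSpace ℝ (Fin n)))) := by
    intro t
    rw [gradient, fderiv_partial_right L (q t) (v t) (hL.differentiable two_ne_zero _)]
  simp only [heq]
  apply (InnerProductSpace.toDual ℝ (EuclideanSpace ℝ (Fin n))).symm.continuous.comp_continuousOn
  exact ContinuousOn.clm_comp
    ((hL.continuous_fderiv two_ne_zero).comp_continuousOn (hqc.prodMk hv)) continuousOn_const

lemma contOn_grad_left (L : EuclideanSpace ℝ (Fin n) × EuclideanSpace ℝ (Fin n) → ℝ)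
    (hL : ContDiff ℝ 2 L) {q v : ℝ → EuclideanSpace ℝ (Fin n)}
    (hqc : ContinuousOn q (Icc a b)) (hv : ContinuousOn v (Icc a b)) :
    ContinuousOn (fun t => gradient (fun u => L (u, v t)) (q t)) (Icc a b) := by
  have heq : ∀ t, gradient (fun u => L (u, v t)) (q t)
      = (InnerProductSpace.toDual ℝ (EuclideanSpace ℝ (Fin n))).symm
        ((fderiv ℝ L (q t, v t)).comp
          (ContinuousLinearMap.inl ℝ (EuclideanSpace ℝ (Fin n)) (EuclideanSpace ℝ (Fin n)))) := by
    intro t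
    rw [gradient, fderiv_partial_left L (q t) (v t) (hL.differentiable two_ne_zero _)]
  simp only [heq]
  apply (InnerProductSpace.toDual ℝ (EuclideanSpace ℝ (Fin n))).symm.continuous.comp_continuousOn
  exact ContinuousOn.clm_comp
    ((hL.continuous_fderiv two_ne_zero).comp_continuousOn (hqc.prodMk hv)) continuousOn_const

lemma contOn_grad_gamma (g : EuclideanSpace ℝ (Fin n) → ℝ) (hg : ContDiff ℝ 2 g)
    {q : ℝ → EuclideanSpace ℝ (Fin n)} (hqc : ContinuousOn q (Icc a b)) :
    ContinuousOn (fun t => gradient g (q t)) (Icc a b) := by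
  simp only [gradient]
  apply (InnerProductSpace.toDual ℝ (EuclideanSpace ℝ (Fin n))).symm.continuous.comp_continuousOn
  exact (hg.continuous_fderiv two_ne_zero).comp_continuousOn hqc

lemma contOn_D
    (L : EuclideanSpace ℝ (Fin n) × EuclideanSpace ℝ (Fin n) → ℝ) (hL : ContDiff ℝ 2 L)
    (γ : ℕ → EuclideanSpace ℝ (Fin n) → ℝ) (hγ : ∀ i < m, ContDiff ℝ 2 (γ i))
    (w' : ℕ → ℝ → ℝ) (hw' : ∀ i < m, ContinuousOn (w' i) (Icc a b))
    {q q' v p δq δq' δv δp : ℝ → EuclideanSpace ℝ (Fin n)}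
    (hqc : ContinuousOn q (Icc a b)) (hq' : ContinuousOn q' (Icc a b))
    (hv : ContinuousOn v (Icc a b)) (hp : ContinuousOn p (Icc a b))
    (hδq : ContinuousOn δq (Icc a b)) (hδq' : ContinuousOn δq' (Icc a b))
    (hδv : ContinuousOn δv (Icc a b)) (hδp : ContinuousOn δp (Icc a b)) :
    ContinuousOn (fun t => fderiv ℝ L (q t, v t) (δq t, δv t)
      + ∑ i ∈ Finset.range m, fderiv ℝ (γ i) (q t) (δq t) * w' i t
      + (⟪p t, δq' t - δv t⟫ + ⟪δp t, q' t - v t⟫)) (Icc a b) := by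
  apply ContinuousOn.add
  apply ContinuousOn.add
  · exact ContinuousOn.clm_apply
      ((hL.continuous_fderiv two_ne_zero).comp_continuousOn (hqc.prodMk hv)) (hδq.prodMk hδv)
  · apply continuousOn_finset_sum
    intro i hi
    have hi' := Finset.mem_range.1 hi
    exact (ContinuousOn.clm_apply
      (((hγ i hi').continuous_fderiv two_ne_zero).comp_continuousOn hqc) hδq).mul (hw' i hi')
  · exact (hp.inner (hδq'.sub hδv)).add (hδp.inner (hq'.sub hv))

end Grad


set_option maxHeartbeats 1600000 in
/-- Pathwise Lagrange–d'Alembert–Pontryagin principle: a path `(q,v,p)`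
satisfies `d𝔊 + ∫ ⟨F(q,v), δq⟩ dt = 0` for every admissible variation iff
`q' = v`, `p = ∂L/∂v(q,v)`, and `p` is C¹ with
`p' = ∂L/∂q(q,v) + F(q,v) + ∑_i ∂γ_i/∂q(q) w_i'`. -/
theorem lagrange_dalembert_pontryagin_principle
    (a b : ℝ) (hab : a < b) (n m : ℕ) (hn : 1 ≤ n)
    (L : EuclideanSpace ℝ (Fin n) × EuclideanSpace ℝ (Fin n) → ℝ)
    (hL : ContDiff ℝ 2 L)
    (γ : ℕ → EuclideanSpace ℝ (Fin n) → ℝ)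
    (hγ : ∀ i < m, ContDiff ℝ 2 (γ i))
    (w w' : ℕ → ℝ → ℝ)
    (hw : ∀ i < m, ∀ t ∈ Set.Icc a b, HasDerivWithinAt (w i) (w' i t) (Set.Icc a b) t)
    (hw' : ∀ i < m, ContinuousOn (w' i) (Set.Icc a b))
    (F : EuclideanSpace ℝ (Fin n) × EuclideanSpace ℝ (Fin n) →
      EuclideanSpace ℝ (Fin n))
    (hF : Continuous F)
    (q₁ q₂ : EuclideanSpace ℝ (Fin n))
    (q q' v p : ℝ → EuclideanSpace ℝ (Fin n))
    (hq : ∀ t ∈ Set.Icc a b, HasDerivWithinAt q (q' t) (Set.Icc a b) t)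
    (hq' : ContinuousOn q' (Set.Icc a b))
    (hv : ContinuousOn v (Set.Icc a b))
    (hp : ContinuousOn p (Set.Icc a b))
    (hqa : q a = q₁) (hqb : q b = q₂) :
    (∀ δq δq' δv δp : ℝ → EuclideanSpace ℝ (Fin n),
        (∀ t ∈ Set.Icc a b, HasDerivWithinAt δq (δq' t) (Set.Icc a b) t) →
        ContinuousOn δq' (Set.Icc a b) →
        δq a = 0 → δq b = 0 →
        ContinuousOn δv (Set.Icc a b) → ContinuousOn δp (Set.Icc a b) →
        deriv (fun ε : ℝ => HPaction a b n m L γ w'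
            (fun t => q t + ε • δq t) (fun t => q' t + ε • δq' t)
            (fun t => v t + ε • δv t) (fun t => p t + ε • δp t)) 0
          + ∫ t in a..b, ⟪F (q t, v t), δq t⟫ = 0)
    ↔
    ((∀ t ∈ Set.Icc a b, q' t = v t) ∧
     (∀ t ∈ Set.Icc a b, p t = gradient (fun u => L (q t, u)) (v t)) ∧
     (∃ p' : ℝ → EuclideanSpace ℝ (Fin n),
        ContinuousOn p' (Set.Icc a b) ∧
        (∀ t ∈ Set.Icc a b, HasDerivWithinAt p (p' t) (Set.Icc a b) t) ∧
        (∀ t ∈ Set.Icc a b,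
          p' t = gradient (fun x => L (x, v t)) (q t) + F (q t, v t)
            + ∑ i ∈ Finset.range m, w' i t • gradient (γ i) (q t)))) := by
  have hqcont : ContinuousOn q (Icc a b) := fun t ht => (hq t ht).continuousWithinAt
  have hFc : ContinuousOn (fun t => F (q t, v t)) (Icc a b) :=
    hF.comp_continuousOn (hqcont.prodMk hv)
  constructor
  · intro H
    -- integral form of the hypothesis
    have key : ∀ δq δq' δv δp : ℝ → EuclideanSpace ℝ (Fin n),
        (∀ t ∈ Set.Icc a b, HasDerivWithinAt δq (δq' t) (Set.Icc a b) t) →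
        ContinuousOn δq' (Set.Icc a b) →
        δq a = 0 → δq b = 0 →
        ContinuousOn δv (Set.Icc a b) → ContinuousOn δp (Set.Icc a b) →
        (∫ t in a..b, (fderiv ℝ L (q t, v t) (δq t, δv t)
          + ∑ i ∈ Finset.range m, fderiv ℝ (γ i) (q t) (δq t) * w' i t
          + (⟪p t, δq' t - δv t⟫ + ⟪δp t, q' t - v t⟫)
          + ⟪F (q t, v t), δq t⟫)) = 0 := by
      intro δq δq' δv δp hδq hδq' ha0 hb0 hδv hδp
      have hδqc : ContinuousOn δq (Icc a b) := fun t ht => (hδq t ht).continuousWithinAt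
      have hda := hasDerivAt_action hab L hL γ hγ w' hw' q q' v p hqcont hq' hv hp
        δq δq' δv δp hδqc hδq' hδv hδp
      have hH := H δq δq' δv δp hδq hδq' ha0 hb0 hδv hδp
      rw [hda.deriv] at hH
      have hintD : IntervalIntegrable (fun t => fderiv ℝ L (q t, v t) (δq t, δv t)
          + ∑ i ∈ Finset.range m, fderiv ℝ (γ i) (q t) (δq t) * w' i t
          + (⟪p t, δq' t - δv t⟫ + ⟪δp t, q' t - v t⟫)) volume a b := by
        apply ContinuousOn.intervalIntegrable
        rw [uIcc_of_le hab.le]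
        exact contOn_D L hL γ hγ w' hw' hqcont hq' hv hp hδqc hδq' hδv hδp
      have hintF : IntervalIntegrable (fun t => ⟪F (q t, v t), δq t⟫) volume a b := by
        apply ContinuousOn.intervalIntegrable
        rw [uIcc_of_le hab.le]
        exact hFc.inner hδqc
      rw [intervalIntegral.integral_add hintD hintF]
      exact hH
    -- Step 1 : q' = v
    have h1 : ∀ t ∈ Icc a b, q' t = v t := by
      have hk := key (fun _ => 0) (fun _ => 0) (fun _ => 0) (fun t => q' t - v t)
        (fun t _ => hasDerivWithinAt_const t _ 0) continuousOn_const rfl rfl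
        continuousOn_const (hq'.sub hv)
      simp only [Prod.mk_zero_zero, map_zero, inner_zero_right, zero_mul, mul_zero,
        Finset.sum_const_zero, sub_zero, add_zero, zero_add, sub_self] at hk
      intro t ht
      have hz := zero_of_nonneg_integral_zero hab ((hq'.sub hv).inner (hq'.sub hv))
        (fun s _ => real_inner_self_nonneg) hk t ht
      exact sub_eq_zero.1 (inner_self_eq_zero.1 hz)
    -- Step 2 : p = ∂L/∂v
    have h2 : ∀ t ∈ Icc a b, p t = gradient (fun u => L (q t, u)) (v t) := by
      set X : ℝ → EuclideanSpace ℝ (Fin n) :=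
        fun t => gradient (fun u => L (q t, u)) (v t) with hX
      have hXc : ContinuousOn X (Icc a b) := contOn_grad_right L hL hqcont hv
      have hk := key (fun _ => 0) (fun _ => 0) (fun t => X t - p t) (fun _ => 0)
        (fun t _ => hasDerivWithinAt_const t _ 0) continuousOn_const rfl rfl
        (hXc.sub hp) continuousOn_const
      have heq : ∀ t, fderiv ℝ L (q t, v t) ((0:EuclideanSpace ℝ (Fin n)), X t - p t)
          + ∑ i ∈ Finset.range m, fderiv ℝ (γ i) (q t) 0 * w' i t
          + (⟪p t, (0:EuclideanSpace ℝ (Fin n)) - (X t - p t)⟫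
            + ⟪(0:EuclideanSpace ℝ (Fin n)), q' t - v t⟫)
          + ⟪F (q t, v t), (0:EuclideanSpace ℝ (Fin n))⟫
          = ⟪X t - p t, X t - p t⟫ := by
        intro t
        rw [← inner_grad_right L hL (q t) (v t) (X t - p t)]
        simp only [map_zero, zero_mul, Finset.sum_const_zero, add_zero,
          inner_zero_right, inner_zero_left, zero_sub, inner_neg_right]
        rw [inner_sub_left]
        ring
      simp only [heq] at hk
      intro t ht
      have hz := zero_of_nonneg_integral_zero hab ((hXc.sub hp).inner (hXc.sub hp))
        (fun s _ => real_inner_self_nonneg) hk t ht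
      have := inner_self_eq_zero.1 hz
      have h0 : X t - p t = 0 := this
      have : p t = X t := by
        have := sub_eq_zero.1 h0
        exact this.symm
      exact this
    -- Step 3 : du Bois-Reymond
    have h3 : ∃ p' : ℝ → EuclideanSpace ℝ (Fin n),
        ContinuousOn p' (Set.Icc a b) ∧
        (∀ t ∈ Set.Icc a b, HasDerivWithinAt p (p' t) (Set.Icc a b) t) ∧
        (∀ t ∈ Set.Icc a b,
          p' t = gradient (fun x => L (x, v t)) (q t) + F (q t, v t)
            + ∑ i ∈ Finset.range m, w' i t • gradient (γ i) (q t)) := by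
      set f : ℝ → EuclideanSpace ℝ (Fin n) := fun t =>
        gradient (fun x => L (x, v t)) (q t) + F (q t, v t)
          + ∑ i ∈ Finset.range m, w' i t • gradient (γ i) (q t) with hf
      have hfc : ContinuousOn f (Icc a b) := by
        apply ContinuousOn.add
        apply ContinuousOn.add
        · exact contOn_grad_left L hL hqcont hv
        · exact hFc
        · apply continuousOn_finset_sum
          intro i hi
          exact (hw' i (Finset.mem_range.1 hi)).smul
            (contOn_grad_gamma (γ i) (hγ i (Finset.mem_range.1 hi)) hqcont)
      set P : ℝ → EuclideanSpace ℝ (Fin n) := fun t => ∫ s in a..t, f s with hPdef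
      have hP : ∀ t ∈ Icc a b, HasDerivWithinAt P (f t) (Icc a b) t :=
        fun t ht => ftc_within hab f hfc ht
      have hPc : ContinuousOn P (Icc a b) := fun t ht => (hP t ht).continuousWithinAt
      -- orthogonality of p - P to mean-zero test functions
      have horto : ∀ φ : ℝ → EuclideanSpace ℝ (Fin n), ContinuousOn φ (Icc a b) →
          (∫ t in a..b, φ t) = 0 → (∫ t in a..b, ⟪p t - P t, φ t⟫) = 0 := by
        intro φ hφ hφ0
        set δq : ℝ → EuclideanSpace ℝ (Fin n) := fun t => ∫ s in a..t, φ s with hδqdef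
        have hδq : ∀ t ∈ Icc a b, HasDerivWithinAt δq (φ t) (Icc a b) t :=
          fun t ht => ftc_within hab φ hφ ht
        have hδqc : ContinuousOn δq (Icc a b) := fun t ht => (hδq t ht).continuousWithinAt
        have hδqa : δq a = 0 := intervalIntegral.integral_same
        have hδqb : δq b = 0 := hφ0
        have hk := key δq φ (fun _ => 0) (fun _ => 0) hδq hφ hδqa hδqb
          continuousOn_const continuousOn_const
        -- rewrite the integrand of hk
        have hEq : EqOn (fun t => fderiv ℝ L (q t, v t) (δq t, (0:EuclideanSpace ℝ (Fin n)))
            + ∑ i ∈ Finset.range m, fderiv ℝ (γ i) (q t) (δq t) * w' i t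
            + (⟪p t, φ t - (0:EuclideanSpace ℝ (Fin n))⟫
              + ⟪(0:EuclideanSpace ℝ (Fin n)), q' t - v t⟫)
            + ⟪F (q t, v t), δq t⟫)
            (fun t => ⟪f t, δq t⟫ + ⟪p t, φ t⟫) (uIcc a b) := by
          intro t _
          simp only [inner_zero_left, sub_zero, add_zero, hf]
          rw [inner_add_left, inner_add_left, inner_grad_left L hL,
            inner_sum_smul_grad γ w' t (q t) (δq t)]
          ring
        rw [intervalIntegral.integral_congr hEq] at hk
        have hparts := integral_inner_parts hab hP hfc hδq hφ
        rw [hδqa, hδqb, inner_zero_right, inner_zero_right, sub_self] at hparts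
        have hi1 : IntervalIntegrable (fun t => ⟪P t, φ t⟫) volume a b := by
          apply ContinuousOn.intervalIntegrable
          rw [uIcc_of_le hab.le]; exact hPc.inner hφ
        have hi2 : IntervalIntegrable (fun t => ⟪f t, δq t⟫) volume a b := by
          apply ContinuousOn.intervalIntegrable
          rw [uIcc_of_le hab.le]; exact hfc.inner hδqc
        have hi3 : IntervalIntegrable (fun t => ⟪p t, φ t⟫) volume a b := by
          apply ContinuousOn.intervalIntegrable
          rw [uIcc_of_le hab.le]; exact hp.inner hφ
        have hsub : (∫ t in a..b, (⟪p t, φ t⟫ - ⟪P t, φ t⟫)) = 0 := by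
          rw [intervalIntegral.integral_sub hi3 hi1]
          have e1 : (∫ t in a..b, ⟪p t, φ t⟫) = - ∫ t in a..b, ⟪f t, δq t⟫ := by
            rw [intervalIntegral.integral_add hi2 hi3] at hk
            linarith
          have e2 : (∫ t in a..b, ⟪P t, φ t⟫) = - ∫ t in a..b, ⟪f t, δq t⟫ := by
            rw [intervalIntegral.integral_add hi1 hi2] at hparts
            linarith
          rw [e1, e2]; ring
        rw [← hsub]
        congr 1; funext t; rw [inner_sub_left]
      have hconst := eq_const_of_orthogonal hab (hp.sub hPc) horto
      set c : EuclideanSpace ℝ (Fin n) :=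
        (b - a)⁻¹ • ∫ s in a..b, ((fun u => p u - P u) s) with hcdef
      refine ⟨f, hfc, ?_, fun t ht => rfl⟩
      intro t ht
      have hder : HasDerivWithinAt (fun u => c + P u) (f t) (Icc a b) t :=
        (hP t ht).const_add c
      apply hder.congr
      · intro u hu
        show p u = c + P u
        rw [← sub_eq_iff_eq_add]
        exact hconst u hu
      · show p t = c + P t
        rw [← sub_eq_iff_eq_add]
        exact hconst t ht
    exact ⟨h1, h2, h3⟩
  · rintro ⟨h1, h2, ⟨p', hp'c, hp'd, hp'eq⟩⟩
    intro δq δq' δv δp hδq hδq' ha0 hb0 hδv hδp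
    have hδqc : ContinuousOn δq (Icc a b) := fun t ht => (hδq t ht).continuousWithinAt
    have hda := hasDerivAt_action hab L hL γ hγ w' hw' q q' v p hqcont hq' hv hp
      δq δq' δv δp hδqc hδq' hδv hδp
    rw [hda.deriv]
    have hintD : IntervalIntegrable (fun t => fderiv ℝ L (q t, v t) (δq t, δv t)
        + ∑ i ∈ Finset.range m, fderiv ℝ (γ i) (q t) (δq t) * w' i t
        + (⟪p t, δq' t - δv t⟫ + ⟪δp t, q' t - v t⟫)) volume a b := by
      apply ContinuousOn.intervalIntegrable
      rw [uIcc_of_le hab.le]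
      exact contOn_D L hL γ hγ w' hw' hqcont hq' hv hp hδqc hδq' hδv hδp
    have hintF : IntervalIntegrable (fun t => ⟪F (q t, v t), δq t⟫) volume a b := by
      apply ContinuousOn.intervalIntegrable
      rw [uIcc_of_le hab.le]
      exact hFc.inner hδqc
    rw [← intervalIntegral.integral_add hintD hintF]
    have hEq : EqOn (fun t => fderiv ℝ L (q t, v t) (δq t, δv t)
        + ∑ i ∈ Finset.range m, fderiv ℝ (γ i) (q t) (δq t) * w' i t
        + (⟪p t, δq' t - δv t⟫ + ⟪δp t, q' t - v t⟫)
        + ⟪F (q t, v t), δq t⟫)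
        (fun t => ⟪p t, δq' t⟫ + ⟪p' t, δq t⟫) (uIcc a b) := by
      intro t ht
      rw [uIcc_of_le hab.le] at ht
      simp only
      rw [h1 t ht, sub_self, inner_zero_right, add_zero, inner_sub_right]
      have hsp : fderiv ℝ L (q t, v t) (δq t, δv t)
          = fderiv ℝ L (q t, v t) (δq t, 0) + fderiv ℝ L (q t, v t) (0, δv t) := by
        rw [← map_add]
        congr 1
        simp
      rw [hsp, hp'eq t ht, inner_add_left, inner_add_left,
        inner_grad_left L hL, inner_sum_smul_grad γ w' t (q t) (δq t)]
      have hpv : ⟪p t, δv t⟫ = fderiv ℝ L (q t, v t) (0, δv t) := by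
        rw [h2 t ht, inner_grad_right L hL]
      rw [hpv]
      ring
    rw [intervalIntegral.integral_congr hEq]
    rw [integral_inner_parts hab hp'd hp'c hδq hδq']
    rw [ha0, hb0, inner_zero_right, inner_zero_right, sub_self]
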